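/- Let ρ be a d-dimensional density matrix with spectral decomposition ρ = Σ_k λ_k |ψ_k⟩⟨ψ_k| having exactly r nonzero eigenvalues, and let κ = (max_k λ_k)/(min_{k:λ_k>0} λ_k). For each parameter direction i, let ∂_i ρ be Hermitian matrices supported appropriately, and define K_{ij} = 4 Σ_{k,l: λ_k+λ_l>0} Re[⟨ψ_k|∂_i ρ|ψ_l⟩⟨ψ_l|∂_j ρ|ψ_k⟩]/(λ_k+λ_l)² and J_{ij} = 2 Σ_{k,l: λ_k+λ_l>0} Re[⟨ψ_k|∂_i ρ|ψ_l⟩⟨ψ_l|∂_j ρ|ψ_k⟩]/(λ_k+λ_l). Then K ⪯ 2rκ J as real symmetric matrices (i.e., 2rκJ − K is positive semidefinite). -/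

import Mathlib

open Matrix ComplexOrder

lemma herm_conj_aux {d : ℕ} (A : Matrix (Fin d) (Fin d) ℂ) (hA : A.IsHermitian)
    (v w : Fin d → ℂ) :
    star v ⬝ᵥ (A *ᵥ w) = starRingEnd ℂ (star w ⬝ᵥ (A *ᵥ v)) := by
  rw [show (starRingEnd ℂ) (star w ⬝ᵥ (A *ᵥ v)) = star (star w ⬝ᵥ (A *ᵥ v)) from rfl,
    ← Matrix.star_dotProduct, Matrix.star_mulVec, hA.eq, ← Matrix.dotProduct_mulVec]

lemma quad_normSq {m : ℕ} (x : Fin m → ℝ) (a : Fin m → ℂ) :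
    ∑ i, ∑ j, x i * x j * (a i * starRingEnd ℂ (a j)).re
      = Complex.normSq (∑ i, (x i : ℂ) * a i) := by
  have h1 : ∀ i j : Fin m, x i * x j * (a i * starRingEnd ℂ (a j)).re
      = (((x i : ℂ) * a i) * starRingEnd ℂ ((x j : ℂ) * a j)).re := by
    intro i j
    rw [_root_.map_mul, Complex.conj_ofReal]
    rw [show ((x i : ℂ) * a i * ((x j : ℂ) * starRingEnd ℂ (a j)))
        = ((x i * x j : ℝ) : ℂ) * (a i * starRingEnd ℂ (a j)) by push_cast; ring,
      Complex.re_ofReal_mul]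
  simp only [h1, ← Complex.re_sum, ← Finset.mul_sum, ← map_sum]
  rw [← Finset.sum_mul, Complex.mul_conj, Complex.ofReal_re]

lemma sum_swap4 {m d : ℕ} (g : Fin m → Fin m → Fin d → Fin d → ℝ) :
    ∑ i, ∑ j, ∑ k, ∑ l, g i j k l = ∑ k, ∑ l, ∑ i, ∑ j, g i j k l :=
  calc ∑ i, ∑ j, ∑ k, ∑ l, g i j k l
      = ∑ i, ∑ k, ∑ j, ∑ l, g i j k l :=
        Finset.sum_congr rfl fun i _ => Finset.sum_comm
    _ = ∑ k, ∑ i, ∑ j, ∑ l, g i j k l := Finset.sum_comm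
    _ = ∑ k, ∑ i, ∑ l, ∑ j, g i j k l :=
        Finset.sum_congr rfl fun k _ => Finset.sum_congr rfl fun i _ => Finset.sum_comm
    _ = ∑ k, ∑ l, ∑ i, ∑ j, g i j k l :=
        Finset.sum_congr rfl fun k _ => Finset.sum_comm

theorem stmt6 {d m r : ℕ} (lam : Fin d → ℝ) (ψk : Fin d → Fin d → ℂ)
    (hlam_nonneg : ∀ k, 0 ≤ lam k) (hlam_sum : ∑ k, lam k = 1)
    (horth : ∀ k l, star (ψk k) ⬝ᵥ ψk l = if k = l then 1 else 0)
    (hr : (Finset.univ.filter (fun k => lam k ≠ 0)).card = r)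
    (lmax lmin κ : ℝ)
    (hmax : ∀ k, lam k ≤ lmax) (hmax' : ∃ k, lam k = lmax)
    (hmin : ∀ k, lam k ≠ 0 → lmin ≤ lam k) (hmin' : ∃ k, lam k ≠ 0 ∧ lam k = lmin)
    (hκ : κ = lmax / lmin)
    (dρ : Fin m → Matrix (Fin d) (Fin d) ℂ)
    (hherm : ∀ i, (dρ i).IsHermitian)
    (K J : Matrix (Fin m) (Fin m) ℝ)
    (hK : ∀ i j, K i j = 4 * ∑ k, ∑ l, if 0 < lam k + lam l then
        ((star (ψk k) ⬝ᵥ (dρ i *ᵥ ψk l)) *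
          (star (ψk l) ⬝ᵥ (dρ j *ᵥ ψk k))).re / (lam k + lam l) ^ 2 else 0)
    (hJ : ∀ i j, J i j = 2 * ∑ k, ∑ l, if 0 < lam k + lam l then
        ((star (ψk k) ⬝ᵥ (dρ i *ᵥ ψk l)) *
          (star (ψk l) ⬝ᵥ (dρ j *ᵥ ψk k))).re / (lam k + lam l) else 0) :
    ((2 * (r : ℝ) * κ) • J - K).PosSemidef := by
  set a : Fin d → Fin d → Fin m → ℂ :=
    fun k l i => star (ψk k) ⬝ᵥ (dρ i *ᵥ ψk l) with ha
  have hK' : ∀ i j, K i j = 4 * ∑ k, ∑ l, if 0 < lam k + lam l then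
      (a k l i * a l k j).re / (lam k + lam l) ^ 2 else 0 := by
    intro i j; rw [hK]
  have hJ' : ∀ i j, J i j = 2 * ∑ k, ∑ l, if 0 < lam k + lam l then
      (a k l i * a l k j).re / (lam k + lam l) else 0 := by
    intro i j; rw [hJ]
  have hconj : ∀ k l i, a l k i = starRingEnd ℂ (a k l i) := by
    intro k l i
    simp only [ha]
    exact herm_conj_aux (dρ i) (hherm i) (ψk l) (ψk k)
  -- scalar facts
  have hlmin : 0 < lmin := by
    obtain ⟨k, hk, he⟩ := hmin'
    exact he ▸ (hlam_nonneg k).lt_of_ne (Ne.symm hk)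
  have hrl : (1:ℝ) ≤ r * lmax := by
    calc (1:ℝ) = ∑ k, lam k := hlam_sum.symm
      _ = ∑ k ∈ Finset.univ.filter (fun k => lam k ≠ 0), lam k :=
          (Finset.sum_filter_ne_zero _).symm
      _ ≤ (Finset.univ.filter (fun k => lam k ≠ 0)).card • lmax :=
          Finset.sum_le_card_nsmul _ _ _ (fun k _ => hmax k)
      _ = r * lmax := by rw [hr]; simp [nsmul_eq_mul]
  have keyb : ∀ k l, 0 < lam k + lam l → 1 / (lam k + lam l) ≤ (r : ℝ) * κ := by
    intro k l hs
    have hge : lmin ≤ lam k + lam l := by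
      by_cases hk : lam k = 0
      · have hl : lam l ≠ 0 := by intro h0; rw [hk, h0] at hs; simp at hs
        have := hmin l hl
        linarith [hlam_nonneg k]
      · have := hmin k hk
        linarith [hlam_nonneg l]
    calc 1 / (lam k + lam l) ≤ 1 / lmin := by
          apply one_div_le_one_div_of_le hlmin hge
      _ ≤ ((r : ℝ) * lmax) / lmin := by gcongr
      _ = (r : ℝ) * κ := by rw [hκ, mul_div_assoc]
  have coef_nonneg : ∀ s : ℝ, 0 < s → 1/s ≤ (r:ℝ)*κ →
      0 ≤ 4*((r:ℝ)*κ)/s - 4/s^2 := by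
    intro s hs hb
    have h1 : 1 ≤ (r:ℝ)*κ*s := (div_le_iff₀ hs).mp hb
    rw [sub_nonneg, div_le_div_iff₀ (by positivity) hs]
    nlinarith [hs.le, h1]
  -- symmetry
  have hsymm : ∀ (f : ℝ → ℝ) (i j : Fin m),
      (∑ k, ∑ l, if 0 < lam k + lam l then (a k l j * a l k i).re / f (lam k + lam l) else 0)
    = (∑ k, ∑ l, if 0 < lam k + lam l then (a k l i * a l k j).re / f (lam k + lam l) else 0) := by
    intro f i j
    rw [Finset.sum_comm]
    refine Finset.sum_congr rfl fun k _ => Finset.sum_congr rfl fun l _ => ?_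
    rw [add_comm (lam l) (lam k), mul_comm (a l k j) (a k l i)]
  have hKsymm : ∀ i j, K j i = K i j := by
    intro i j; rw [hK', hK']; exact congrArg (4 * ·) (hsymm (· ^ 2) i j)
  have hJsymm : ∀ i j, J j i = J i j := by
    intro i j; rw [hJ', hJ']; exact congrArg (2 * ·) (hsymm id i j)
  rw [Matrix.posSemidef_iff_dotProduct_mulVec]
  constructor
  · ext i j
    simp only [Matrix.conjTranspose_apply, Matrix.sub_apply, Matrix.smul_apply,
      star_trivial, smul_eq_mul]
    rw [hKsymm, hJsymm]
  · intro x
    have hform : star x ⬝ᵥ (((2 * (r:ℝ) * κ) • J - K) *ᵥ x)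
        = ∑ i, ∑ j, x i * ((2*(r:ℝ)*κ * J i j - K i j) * x j) := by
      simp [dotProduct, mulVec, Finset.mul_sum, Matrix.sub_apply, Matrix.smul_apply,
        smul_eq_mul, mul_assoc]
    rw [hform]
    have expand : ∀ i j : Fin m, x i * ((2*(r:ℝ)*κ * J i j - K i j) * x j)
        = ∑ k, ∑ l, (if 0 < lam k + lam l then
            (4*((r:ℝ)*κ)/(lam k + lam l) - 4/(lam k + lam l)^2) *
            (x i * x j * (a k l i * a l k j).re) else 0) := by
      intro i j
      rw [hK', hJ']
      rw [show x i * ((2*(r:ℝ)*κ * (2 * ∑ k, ∑ l, if 0 < lam k + lam l then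
            (a k l i * a l k j).re / (lam k + lam l) else 0)
          - 4 * ∑ k, ∑ l, if 0 < lam k + lam l then
            (a k l i * a l k j).re / (lam k + lam l) ^ 2 else 0) * x j)
        = (4 * (x i * x j)) * (((r:ℝ)*κ) * (∑ k, ∑ l, if 0 < lam k + lam l then
            (a k l i * a l k j).re / (lam k + lam l) else 0)
          - ∑ k, ∑ l, if 0 < lam k + lam l then
            (a k l i * a l k j).re / (lam k + lam l) ^ 2 else 0) from by ring]
      simp only [Finset.mul_sum, ← Finset.sum_sub_distrib]
      refine Finset.sum_congr rfl fun k _ => Finset.sum_congr rfl fun l _ => ?_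
      by_cases h : 0 < lam k + lam l
      · simp only [if_pos h]
        have hne : lam k + lam l ≠ 0 := ne_of_gt h
        field_simp
      · simp [h]
    simp only [expand]
    rw [sum_swap4]
    refine Finset.sum_nonneg fun k _ => Finset.sum_nonneg fun l _ => ?_
    by_cases h : 0 < lam k + lam l
    · simp only [if_pos h, ← Finset.mul_sum]
      have hrw : ∀ i j : Fin m, x i * x j * (a k l i * a l k j).re
          = x i * x j * (a k l i * starRingEnd ℂ (a k l j)).re := by
        intro i j; rw [← hconj]
      calc (0:ℝ) ≤ (4*((r:ℝ)*κ)/(lam k + lam l) - 4/(lam k + lam l)^2) *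
            Complex.normSq (∑ i, (x i : ℂ) * a k l i) := by
            apply mul_nonneg (coef_nonneg _ h (keyb k l h)) (Complex.normSq_nonneg _)
        _ = _ := by
            rw [← quad_normSq x (fun i => a k l i)]
            congr 1
            exact (Finset.sum_congr rfl fun i _ => Finset.sum_congr rfl fun j _ => (hrw i j).symm)
    · simp [h]
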